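/- Let Γ be a group with finite generating set S, and suppose Γ has subexponential word growth: for every ε > 0 there exists N such that |B_S(n)| ≤ exp(ε·n) for all n ≥ N, where B_S(n) = {g ∈ Γ : |g|_S ≤ n}. Then Γ is not sharply MIF: for every C > 0 there exist n ≥ 2 and a nontrivial w ∈ Γ∗⟨x⟩ with |w|_{S∪{x}} ≤ n such that w(g) = e for every g ∈ Γ with |g|_S ≤ C·log(n). -/

import Mathlib

open scoped Classical

/-- Word length of `g` with respect to generating set `S` (letters from `S ∪ S⁻¹`). -/
noncomputable def wordLength {G : Type*} [Group G] (S : Set G) (g : G) : ℕ :=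
  sInf {m | ∃ l : List G, l.length = m ∧ (∀ a ∈ l, a ∈ S ∨ a⁻¹ ∈ S) ∧ l.prod = g}

/-- The free product `G ∗ ⟨x⟩`. -/
abbrev FPZ (G : Type*) [Group G] := Monoid.Coprod G (Multiplicative ℤ)

/-- The stable letter `x` raised to the power `m`. -/
def xpow (G : Type*) [Group G] (m : ℤ) : FPZ G :=
  Monoid.Coprod.inr (Multiplicative.ofAdd m)

/-- Evaluation of words with constants: the unique hom `G ∗ ⟨x⟩ → G` restricting to
the identity on `G` and sending `x` to `g`. -/
def wordEval {G : Type*} [Group G] (g : G) : FPZ G →* G :=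
  Monoid.Coprod.lift (MonoidHom.id G) (zpowersHom G g)

/-- The generating set `S ∪ {x}` of `G ∗ ⟨x⟩`. -/
def genSet {G : Type*} [Group G] (S : Set G) : Set (FPZ G) :=
  ((Monoid.Coprod.inl : G →* FPZ G) '' S) ∪ {xpow G 1}

section WL
variable {G : Type*} [Group G] {S : Set G}

lemma wl_le {g : G} {l : List G} (hl : ∀ a ∈ l, a ∈ S ∨ a⁻¹ ∈ S) (hp : l.prod = g) :
    wordLength S g ≤ l.length := Nat.sInf_le ⟨l, rfl, hl, hp⟩

lemma wl_exists (hS : Subgroup.closure S = ⊤) (g : G) :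
    ∃ l : List G, (∀ a ∈ l, a ∈ S ∨ a⁻¹ ∈ S) ∧ l.prod = g ∧ l.length = wordLength S g := by
  have hg : g ∈ Subgroup.closure S := hS ▸ Subgroup.mem_top g
  have hne : ∃ l : List G, (∀ a ∈ l, a ∈ S ∨ a⁻¹ ∈ S) ∧ l.prod = g := by
    induction hg using Subgroup.closure_induction with
    | mem x hx => exact ⟨[x], by simpa using Or.inl hx, by simp⟩
    | one => exact ⟨[], by simp, by simp⟩
    | mul x y _ _ hx hy =>
      obtain ⟨l1, h1, h1p⟩ := hx; obtain ⟨l2, h2, h2p⟩ := hy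
      refine ⟨l1 ++ l2, ?_, by simp [h1p, h2p]⟩
      intro a ha
      rcases List.mem_append.1 ha with h | h
      exacts [h1 a h, h2 a h]
    | inv x _ hx =>
      obtain ⟨l, h1, h1p⟩ := hx
      refine ⟨(l.map (·⁻¹)).reverse, ?_, ?_⟩
      · intro a ha
        simp only [List.mem_reverse, List.mem_map] at ha
        obtain ⟨b, hb, rfl⟩ := ha
        simpa [or_comm] using h1 b hb
      · rw [List.prod_reverse_noncomm]; simp [h1p]
  have : {m | ∃ l : List G, l.length = m ∧ (∀ a ∈ l, a ∈ S ∨ a⁻¹ ∈ S) ∧ l.prod = g}.Nonempty := by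
    obtain ⟨l, h1, h2⟩ := hne; exact ⟨l.length, l, rfl, h1, h2⟩
  obtain ⟨l, hlen, h1, h2⟩ := Nat.sInf_mem this
  exact ⟨l, h1, h2, hlen⟩

lemma wl_one : wordLength S (1 : G) = 0 :=
  Nat.le_zero.1 (by simpa using wl_le (S := S) (g := 1) (l := []) (by simp) (by simp))

lemma wl_mul_le (hS : Subgroup.closure S = ⊤) (g h : G) :
    wordLength S (g * h) ≤ wordLength S g + wordLength S h := by
  obtain ⟨l1, h1, h1p, h1l⟩ := wl_exists hS g
  obtain ⟨l2, h2, h2p, h2l⟩ := wl_exists hS h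
  calc wordLength S (g * h) ≤ (l1 ++ l2).length := wl_le
        (by intro a ha; rcases List.mem_append.1 ha with h | h; exacts [h1 a h, h2 a h])
        (by simp [h1p, h2p])
    _ = _ := by simp [h1l, h2l]

lemma wl_inv_le (hS : Subgroup.closure S = ⊤) (g : G) :
    wordLength S g⁻¹ ≤ wordLength S g := by
  obtain ⟨l, h1, h1p, h1l⟩ := wl_exists hS g
  calc wordLength S g⁻¹ ≤ ((l.map (·⁻¹)).reverse).length := wl_le
        (by intro a ha
            simp only [List.mem_reverse, List.mem_map] at ha
            obtain ⟨b, hb, rfl⟩ := ha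
            simpa [or_comm] using h1 b hb)
        (by rw [List.prod_reverse_noncomm]; simp [h1p])
    _ ≤ _ := by simp [h1l]

lemma wl_mem_le {g : G} (hg : g ∈ S) : wordLength S g ≤ 1 := by
  simpa using wl_le (S := S) (g := g) (l := [g]) (by simpa using Or.inl hg) (by simp)

lemma wl_ball_finite (hS : Subgroup.closure S = ⊤) (hfin : S.Finite) (R : ℕ) :
    {g : G | wordLength S g ≤ R}.Finite := by
  classical
  have hT : (S ∪ S⁻¹).Finite := hfin.union hfin.inv
  have hTfin : Finite ↥(S ∪ S⁻¹) := hT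
  have hLfin : ({l : List ↥(S ∪ S⁻¹) | l.length ≤ R}).Finite := List.finite_length_le _ R
  have himfin : ((fun l : List ↥(S ∪ S⁻¹) => (l.map Subtype.val).prod) ''
      {l : List ↥(S ∪ S⁻¹) | l.length ≤ R}).Finite := hLfin.image _
  refine himfin.subset ?_
  intro g hg
  simp only [Set.mem_setOf_eq] at hg
  obtain ⟨l, h1, h2, hlen⟩ := wl_exists hS g
  have hmem : ∀ a ∈ l, a ∈ S ∪ S⁻¹ := by
    intro a ha; rcases h1 a ha with h | h
    · exact Or.inl h
    · exact Or.inr (by simpa using h)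
  refine ⟨l.pmap (fun a ha => (⟨a, ha⟩ : ↥(S ∪ S⁻¹))) hmem, ?_, ?_⟩
  · simp only [Set.mem_setOf_eq, List.length_pmap]
    omega
  · simp [List.map_pmap, h2]
end WL




section GEN
variable {G : Type*} [Group G] {S : Set G}

lemma xpow_zpow (k : ℤ) : xpow G k = (xpow G 1) ^ k := by
  rw [xpow, xpow, ← map_zpow]
  congr 1
  rw [← ofAdd_zsmul]
  congr 1
  simp

lemma genSet_closure (hS : Subgroup.closure S = ⊤) :
    Subgroup.closure (genSet S) = (⊤ : Subgroup (FPZ G)) := by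
  rw [eq_top_iff]
  intro m hm
  clear hm
  induction m using Monoid.Coprod.induction_on with
  | inl m =>
    have : m ∈ Subgroup.closure S := hS ▸ Subgroup.mem_top m
    have h2 : Monoid.Coprod.inl m ∈ Subgroup.map (Monoid.Coprod.inl : G →* FPZ G)
        (Subgroup.closure S) := Subgroup.mem_map_of_mem _ this
    rw [MonoidHom.map_closure] at h2
    exact Subgroup.closure_mono (by intro a ha; exact Or.inl ha) h2
  | inr n =>
    have : Monoid.Coprod.inr n = (xpow G 1) ^ (Multiplicative.toAdd n) := by
      rw [← xpow_zpow, xpow, ofAdd_toAdd]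
    rw [this]
    exact zpow_mem (Subgroup.subset_closure (by simp [genSet])) _
  | mul x y hx hy => exact mul_mem hx hy
end GEN

section LETTERS
variable {G : Type*} [Group G] {S : Set G}

lemma wl_inl_le (hS : Subgroup.closure S = ⊤) (γ : G) :
    wordLength (genSet S) (Monoid.Coprod.inl γ : FPZ G) ≤ wordLength S γ := by
  obtain ⟨l, h1, h2, hlen⟩ := wl_exists hS γ
  have := wl_le (S := genSet S) (g := (Monoid.Coprod.inl γ : FPZ G))
    (l := l.map (Monoid.Coprod.inl : G →* FPZ G)) ?_ ?_
  · simpa [hlen] using this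
  · intro a ha
    simp only [List.mem_map] at ha
    obtain ⟨b, hb, rfl⟩ := ha
    rcases h1 b hb with h | h
    · exact Or.inl (Or.inl ⟨b, h, rfl⟩)
    · exact Or.inr (Or.inl ⟨b⁻¹, h, by simp⟩)
  · rw [← map_list_prod, h2]

lemma wl_xpow_le (k : ℤ) : wordLength (genSet S) (xpow G k) ≤ k.natAbs := by
  rcases le_or_gt 0 k with hk | hk
  · have := wl_le (S := genSet S) (g := xpow G k) (l := List.replicate k.natAbs (xpow G 1)) ?_ ?_
    · simpa using this
    · intro a ha
      rw [List.eq_of_mem_replicate ha]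
      exact Or.inl (Or.inr rfl)
    · have h : ((k.natAbs : ℤ)) = k := by omega
      rw [List.prod_replicate, xpow_zpow (G := G) k, ← zpow_natCast, h]
  · have := wl_le (S := genSet S) (g := xpow G k) (l := List.replicate k.natAbs (xpow G 1)⁻¹) ?_ ?_
    · simpa using this
    · intro a ha
      rw [List.eq_of_mem_replicate ha]
      simp only [inv_inv]; exact Or.inr (Or.inr rfl)
    · have h : (-(k.natAbs : ℤ)) = k := by omega
      rw [List.prod_replicate, xpow_zpow (G := G) k, inv_pow, ← zpow_natCast, ← zpow_neg, h]

end LETTERS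

section CP
open Monoid

variable (Γ : Type u) [Group Γ]

/-- Index family for the free product `Γ * ℤ` as a `CoprodI`. -/
abbrev Mfam : Bool → Type u := fun b => Bool.rec (ULift (Multiplicative ℤ)) Γ b

instance MfamGroup : ∀ b, Group (Mfam Γ b) := fun b =>
  Bool.rec (inferInstanceAs (Group (ULift (Multiplicative ℤ)))) (inferInstanceAs (Group Γ)) b

abbrev CP := Monoid.CoprodI (Mfam Γ)

variable {Γ}

/-- The `x^k` letter. -/
def xl (k : ℤ) : Mfam Γ false := ULift.up (Multiplicative.ofAdd k)

/-- A `Γ`-letter. -/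
def gl (γ : Γ) : Mfam Γ true := γ

lemma xl_mul (a b : ℤ) : (xl a : Mfam Γ false) * xl b = xl (a + b) := rfl

lemma xl_ne_one {k : ℤ} (hk : k ≠ 0) : (xl k : Mfam Γ false) ≠ 1 := by
  intro h
  have : (Multiplicative.ofAdd k) = (1 : Multiplicative ℤ) := congrArg ULift.down h
  exact hk (by simpa using this)

lemma gl_ne_one {γ : Γ} (hγ : γ ≠ 1) : (gl γ : Mfam Γ true) ≠ 1 := hγ

/-- The homomorphism `CP Γ →* FPZ Γ`. -/
def ψ : CP Γ →* FPZ Γ :=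
  Monoid.CoprodI.lift (fun b => Bool.rec
    ((Monoid.Coprod.inr : Multiplicative ℤ →* FPZ Γ).comp
      (MulEquiv.ulift : ULift (Multiplicative ℤ) ≃* Multiplicative ℤ).toMonoidHom)
    (Monoid.Coprod.inl : Γ →* FPZ Γ) b)

/-- The homomorphism `FPZ Γ →* CP Γ`. -/
def φ : FPZ Γ →* CP Γ :=
  Monoid.Coprod.lift (Monoid.CoprodI.of (M := Mfam Γ) (i := true))
    ((Monoid.CoprodI.of (M := Mfam Γ) (i := false)).comp
      ((MulEquiv.ulift : ULift (Multiplicative ℤ) ≃* Multiplicative ℤ).symm.toMonoidHom))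

lemma ψ_gl (γ : Γ) : ψ (Monoid.CoprodI.of (gl γ)) = Monoid.Coprod.inl γ := by
  rw [ψ, Monoid.CoprodI.lift_of]; rfl

lemma ψ_xl (k : ℤ) : ψ (Monoid.CoprodI.of (xl k : Mfam Γ false)) = xpow Γ k := by
  rw [ψ, Monoid.CoprodI.lift_of]; rfl

lemma φψ : (φ : FPZ Γ →* CP Γ).comp ψ = MonoidHom.id (CP Γ) := by
  apply Monoid.CoprodI.ext_hom
  intro i
  ext m
  cases i
  · show φ (ψ (Monoid.CoprodI.of (m : Mfam Γ false))) = Monoid.CoprodI.of m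
    have : ψ (Monoid.CoprodI.of (m : Mfam Γ false)) = Monoid.Coprod.inr (MulEquiv.ulift m) := by
      rw [ψ, Monoid.CoprodI.lift_of]; rfl
    rw [this, φ, Monoid.Coprod.lift_apply_inr]
    first
      | simp
      | rfl
  · show φ (ψ (Monoid.CoprodI.of (m : Mfam Γ true))) = Monoid.CoprodI.of m
    have : ψ (Monoid.CoprodI.of (m : Mfam Γ true)) = Monoid.Coprod.inl m := by
      rw [ψ, Monoid.CoprodI.lift_of]
    rw [this, φ, Monoid.Coprod.lift_apply_inl]

lemma ψ_injective : Function.Injective (ψ : CP Γ →* FPZ Γ) := by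
  intro a b h
  have hφψ := congrArg φ h
  have h1 : φ (ψ a) = a := by rw [← MonoidHom.comp_apply, φψ]; rfl
  have h2 : φ (ψ b) = b := by rw [← MonoidHom.comp_apply, φψ]; rfl
  rw [h1, h2] at hφψ
  exact hφψ

/-- Any nonempty reduced word has nontrivial product. -/
lemma neword_prod_ne_one {ι : Type*} {M : ι → Type*} [∀ i, Monoid (M i)] {i j : ι}
    (w : Monoid.CoprodI.NeWord M i j) : w.prod ≠ 1 := by
  intro h
  have hinj : Function.Injective (Monoid.CoprodI.Word.prod : Monoid.CoprodI.Word M → _) :=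
    (Monoid.CoprodI.Word.equiv (M := M)).symm.injective
  have heq : Monoid.CoprodI.Word.prod w.toWord =
      Monoid.CoprodI.Word.prod (Monoid.CoprodI.Word.empty) := by
    rw [Monoid.CoprodI.Word.prod_empty, ← Monoid.CoprodI.NeWord.prod, h]
  have := congrArg Monoid.CoprodI.Word.toList (hinj heq)
  exact w.toList_ne_nil this

open Monoid.CoprodI in
lemma mulHead_append_last {ι : Type*} {M : ι → Type*} [∀ i, Monoid (M i)] {i j k l : ι}
    (w₁ : NeWord M i j) (hne : j ≠ k) (w₂ : NeWord M k l) (x : M i)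
    (h : x * (NeWord.append w₁ hne w₂).head ≠ 1) :
    (NeWord.mulHead (NeWord.append w₁ hne w₂) x h).last = w₂.last := by
  simp [NeWord.mulHead, NeWord.replaceHead]

lemma conj_ne_one {s g : Γ} (hs : s ≠ 1) : g⁻¹ * s * g ≠ 1 := by
  intro h
  apply hs
  have := congrArg (fun z => g * z * g⁻¹) h
  simpa [mul_assoc] using this

structure Blk (Γ : Type u) [Group Γ] where
  w : Monoid.CoprodI.NeWord (Mfam Γ) false false
  k1 : ℤ
  k2 : ℤ
  hh : w.head = xl k1
  hl : w.last = xl k2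
  p1 : 1 ≤ k1
  p2 : k2 ≤ -1

open Monoid.CoprodI in
def baseBlk (s : Γ) (hs : s ≠ 1) (g : Γ) : Blk Γ where
  w := .append (.append (.append (.append
        (.singleton (xl 2) (xl_ne_one (by norm_num)))
        (by simp) (.singleton (gl (g⁻¹ * s * g)) (gl_ne_one (conj_ne_one hs))))
        (by simp) (.singleton (xl (-1)) (xl_ne_one (by norm_num))))
        (by simp) (.singleton (gl s⁻¹) (gl_ne_one (inv_ne_one.2 hs))))
        (by simp) (.singleton (xl (-1)) (xl_ne_one (by norm_num)))
  k1 := 2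
  k2 := -1
  hh := by simp
  hl := by simp
  p1 := by norm_num
  p2 := le_refl _

open Monoid.CoprodI in
lemma baseBlk_prod (s : Γ) (hs : s ≠ 1) (g : Γ) :
    (baseBlk s hs g).w.prod = Monoid.CoprodI.of (xl 2) * Monoid.CoprodI.of (gl (g⁻¹ * s * g)) *
      Monoid.CoprodI.of (xl (-1)) * Monoid.CoprodI.of (gl s⁻¹) * Monoid.CoprodI.of (xl (-1)) := by
  simp [baseBlk]

open Monoid.CoprodI in
def combineA (s : Γ) (hs : s ≠ 1) (u v : Blk Γ) : NeWord (Mfam Γ) false false :=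
  .append (.append (.append (.append (.append (.append (.append (.append
    u.w (by simp) (.singleton (gl s) (gl_ne_one hs)))
    (by simp) v.w)
    (by simp) (.singleton (gl s⁻¹) (gl_ne_one (inv_ne_one.2 hs))))
    (by simp) u.w.inv)
    (by simp) (.singleton (gl s) (gl_ne_one hs)))
    (by simp) v.w.inv)
    (by simp) (.singleton (gl s⁻¹) (gl_ne_one (inv_ne_one.2 hs))))
    (by simp) (.singleton (xl (-1)) (xl_ne_one (by norm_num)))

open Monoid.CoprodI in
lemma combineA_head (s : Γ) (hs : s ≠ 1) (u v : Blk Γ) :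
    (combineA s hs u v).head = xl u.k1 := by
  show u.w.head = xl u.k1
  exact u.hh

open Monoid.CoprodI in
def combine (s : Γ) (hs : s ≠ 1) (u v : Blk Γ) : Blk Γ where
  w := (combineA s hs u v).mulHead (xl 1) (by
    rw [combineA_head, xl_mul]
    exact xl_ne_one (by have := u.p1; omega))
  k1 := 1 + u.k1
  k2 := -1
  hh := by
    rw [NeWord.mulHead_head, combineA_head, xl_mul]
  hl := by exact mulHead_append_last _ _ _ _ _
  p1 := by have := u.p1; omega
  p2 := le_refl _

open Monoid.CoprodI in
lemma combine_prod (s : Γ) (hs : s ≠ 1) (u v : Blk Γ) :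
    (combine s hs u v).w.prod = Monoid.CoprodI.of (xl 1) *
      (u.w.prod * Monoid.CoprodI.of (gl s) * v.w.prod * Monoid.CoprodI.of (gl s⁻¹) *
       u.w.prod⁻¹ * Monoid.CoprodI.of (gl s) * v.w.prod⁻¹ * Monoid.CoprodI.of (gl s⁻¹) *
       Monoid.CoprodI.of (xl (-1))) := by
  show (NeWord.mulHead _ _ _).prod = _
  rw [NeWord.mulHead_prod]
  congr 1
  simp [combineA]

def blk (s : Γ) (hs : s ≠ 1) : ℕ → (ℕ → Γ) → Blk Γ
  | 0, f => baseBlk s hs (f 0)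
  | d+1, f => combine s hs (blk s hs d f) (blk s hs d (fun i => f (i + 2 ^ d)))

lemma blk_ne_one (s : Γ) (hs : s ≠ 1) (d : ℕ) (f : ℕ → Γ) :
    ψ (blk s hs d f).w.prod ≠ 1 := by
  intro h
  exact neword_prod_ne_one (blk s hs d f).w (ψ_injective (by simpa using h))

lemma wordEval_ψ_xl (g : Γ) (k : ℤ) : wordEval g (ψ (Monoid.CoprodI.of (xl k : Mfam Γ false))) = g ^ k := by
  rw [ψ_xl, xpow, wordEval, Monoid.Coprod.lift_apply_inr]
  rfl

lemma wordEval_ψ_gl (g γ : Γ) : wordEval g (ψ (Monoid.CoprodI.of (gl γ))) = γ := by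
  rw [ψ_gl, wordEval, Monoid.Coprod.lift_apply_inl]
  rfl

lemma blk_eval (s : Γ) (hs : s ≠ 1) (g : Γ) :
    ∀ (d : ℕ) (f : ℕ → Γ), (∃ i, i < 2 ^ d ∧ f i = g) →
      wordEval g (ψ (blk s hs d f).w.prod) = 1 := by
  intro d
  induction d with
  | zero =>
    intro f ⟨i, hi, hfi⟩
    interval_cases i
    rw [show blk s hs 0 f = baseBlk s hs (f 0) from rfl, baseBlk_prod]
    simp only [map_mul, wordEval_ψ_xl, wordEval_ψ_gl, hfi]
    repeat rw [wordEval_ψ_xl]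
    repeat rw [wordEval_ψ_gl]
    group
  | succ d ih =>
    intro f ⟨i, hi, hfi⟩
    rw [show blk s hs (d+1) f = combine s hs (blk s hs d f) (blk s hs d (fun i => f (i + 2 ^ d)))
        from rfl, combine_prod]
    simp only [map_mul, map_inv, wordEval_ψ_xl, wordEval_ψ_gl]
    repeat rw [wordEval_ψ_xl]
    repeat rw [wordEval_ψ_gl]
    rcases lt_or_ge i (2 ^ d) with hlt | hge
    · rw [ih f ⟨i, hlt, hfi⟩]
      group
    · rw [ih (fun j => f (j + 2 ^ d)) ⟨i - 2 ^ d, by simpa using (by omega : i - 2^d < 2^d), by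
        simpa using (by rw [Nat.sub_add_cancel hge]; exact hfi : f (i - 2^d + 2^d) = g)⟩]
      group

lemma wl_mul_le' {G : Type*} [Group G] {T : Set G} (hG : Subgroup.closure T = ⊤)
    {x y : G} {p q : ℕ} (hx : wordLength T x ≤ p) (hy : wordLength T y ≤ q) :
    wordLength T (x * y) ≤ p + q :=
  le_trans (wl_mul_le hG x y) (add_le_add hx hy)

lemma blk_wl {S : Set Γ} (hS : Subgroup.closure S = ⊤) {s : Γ} (hs : s ≠ 1) (hsS : s ∈ S)
    (R : ℕ) : ∀ (d : ℕ) (f : ℕ → Γ), (∀ i, i < 2 ^ d → wordLength S (f i) ≤ R) →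
      wordLength (genSet S) (ψ (blk s hs d f).w.prod) + 2 ≤ 4 ^ d * (2 * R + 8) := by
  have hG : Subgroup.closure (genSet S) = (⊤ : Subgroup (FPZ Γ)) := genSet_closure hS
  have hwls : wordLength S s ≤ 1 := wl_mem_le hsS
  intro d
  induction d with
  | zero =>
    intro f hf
    rw [show blk s hs 0 f = baseBlk s hs (f 0) from rfl, baseBlk_prod]
    simp only [map_mul, ψ_xl, ψ_gl]
    repeat rw [ψ_xl]
    repeat rw [ψ_gl]
    simp only [map_mul, map_inv]
    have hf0 : wordLength S (f 0) ≤ R := hf 0 (by norm_num)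
    have hconj : wordLength S ((f 0)⁻¹ * s * (f 0)) ≤ R + 1 + R :=
      wl_mul_le' hS (wl_mul_le' hS (le_trans (wl_inv_le hS _) hf0) hwls) hf0
    have h1 : wordLength (genSet S)
        (xpow Γ 2 * (Monoid.Coprod.inl ((f 0)⁻¹) * Monoid.Coprod.inl s * Monoid.Coprod.inl (f 0)) *
          xpow Γ (-1) * Monoid.Coprod.inl s⁻¹ * xpow Γ (-1)) ≤ 2 + (R + 1 + R) + 1 + 1 + 1 :=
      wl_mul_le' hG (wl_mul_le' hG (wl_mul_le' hG (wl_mul_le' hG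
        (wl_xpow_le 2)
        (wl_mul_le' hG (wl_mul_le' hG
          (le_trans (wl_inl_le hS _) (le_trans (wl_inv_le hS _) hf0))
          (le_trans (wl_inl_le hS _) hwls))
          (le_trans (wl_inl_le hS _) hf0)))
        (wl_xpow_le (-1)))
        (le_trans (wl_inl_le hS _) (le_trans (wl_inv_le hS s) hwls)))
        (wl_xpow_le (-1))
    calc wordLength (genSet S) _ + 2 ≤ (2 + (R + 1 + R) + 1 + 1 + 1) + 2 := by
          exact Nat.add_le_add_right h1 2
      _ ≤ 4 ^ 0 * (2 * R + 8) := by ring_nf; omega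
  | succ d ih =>
    intro f hf
    have hu := ih f (fun i hi => hf i (by omega))
    have hv := ih (fun i => f (i + 2 ^ d)) (fun i hi => hf (i + 2 ^ d)
      (by have := Nat.pow_lt_pow_succ (a := 2) (by norm_num) (n := d); omega))
    rw [show blk s hs (d+1) f = combine s hs (blk s hs d f) (blk s hs d (fun i => f (i + 2 ^ d)))
        from rfl, combine_prod]
    simp only [map_mul, map_inv, ψ_xl, ψ_gl]
    repeat rw [ψ_xl]
    repeat rw [ψ_gl]
    simp only [map_mul, map_inv]
    set A := ψ (blk s hs d f).w.prod with hA
    set B := ψ (blk s hs d (fun i => f (i + 2 ^ d))).w.prod with hB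
    set a := wordLength (genSet S) A with ha
    set b := wordLength (genSet S) B with hb
    have hss : wordLength (genSet S) (Monoid.Coprod.inl s : FPZ Γ) ≤ 1 :=
      le_trans (wl_inl_le hS _) hwls
    have hss' : wordLength (genSet S) ((Monoid.Coprod.inl s : FPZ Γ))⁻¹ ≤ 1 :=
      le_trans (wl_inv_le hG _) hss
    have h1 : wordLength (genSet S)
        (xpow Γ 1 * (A * Monoid.Coprod.inl s * B * (Monoid.Coprod.inl s)⁻¹ * A⁻¹ *
          Monoid.Coprod.inl s * B⁻¹ * (Monoid.Coprod.inl s)⁻¹ * xpow Γ (-1)))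
          ≤ 1 + (a + 1 + b + 1 + a + 1 + b + 1 + 1) :=
      wl_mul_le' hG (wl_xpow_le 1)
        (wl_mul_le' hG (wl_mul_le' hG (wl_mul_le' hG (wl_mul_le' hG (wl_mul_le' hG
          (wl_mul_le' hG (wl_mul_le' hG (wl_mul_le' hG
            le_rfl hss) le_rfl) hss') (wl_inv_le hG A)) hss) (wl_inv_le hG B)) hss')
          (wl_xpow_le (-1)))
    have h4 : (4:ℕ) ^ (d+1) * (2*R+8) = 4 * (4 ^ d * (2*R+8)) := by ring
    omega

end CP


set_option maxHeartbeats 1000000 in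
theorem stmt19 (Γ : Type*) [Group Γ] (S : Set Γ) (hSfin : S.Finite)
    (hSgen : Subgroup.closure S = ⊤)
    (hgrowth : ∀ ε : ℝ, 0 < ε → ∃ N : ℕ, ∀ n : ℕ, N ≤ n →
      (Nat.card {g : Γ // wordLength S g ≤ n} : ℝ) ≤ Real.exp (ε * n)) :
    ∀ C : ℝ, 0 < C → ∃ n : ℕ, 2 ≤ n ∧ ∃ w : FPZ Γ, w ≠ 1 ∧
      wordLength (genSet S) w ≤ n ∧
      ∀ g : Γ, (wordLength S g : ℝ) ≤ C * Real.log n → wordEval g w = 1 := by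
  intro C hC
  rcases subsingleton_or_nontrivial Γ with htriv | hnt
  · refine ⟨2, le_rfl, xpow Γ 1, ?_, ?_, ?_⟩
    · intro h
      have h2 : (Monoid.Coprod.lift (1 : Γ →* Multiplicative ℤ)
          (MonoidHom.id (Multiplicative ℤ))) (xpow Γ 1) = Multiplicative.ofAdd 1 := by
        rw [xpow, Monoid.Coprod.lift_apply_inr]
        rfl
      rw [h, map_one] at h2
      exact absurd h2 (by decide)
    · calc wordLength (genSet S) (xpow Γ 1) ≤ (1:ℤ).natAbs := wl_xpow_le 1
        _ ≤ 2 := by norm_num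
    · intro g _
      have hg : g = 1 := Subsingleton.elim g 1
      rw [hg, xpow, wordEval, Monoid.Coprod.lift_apply_inr]
      simp
  · obtain ⟨s, hsS, hs⟩ : ∃ s ∈ S, s ≠ 1 := by
        by_contra h
        push_neg at h
        obtain ⟨g, hg⟩ := exists_ne (1 : Γ)
        have hsub : S ⊆ ((⊥ : Subgroup Γ) : Set Γ) := by
          intro a ha; simpa [Subgroup.mem_bot] using h a ha
        have : g ∈ Subgroup.closure S := hSgen ▸ Subgroup.mem_top g
        have : g ∈ (⊥ : Subgroup Γ) := (Subgroup.closure_le ⊥).2 hsub this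
        exact hg (by simpa [Subgroup.mem_bot] using this)
    -- parameters
    set ε : ℝ := 1 / (8 * C) with hε
    have hεpos : 0 < ε := by positivity
    obtain ⟨N, hN⟩ := hgrowth ε hεpos
    set K : ℝ := Real.exp (2 * ε) with hK
    have hKpos : 0 < K := Real.exp_pos _
    have hMpos : 0 < 4 * K * (8 * C + 10) := by positivity
    set T : ℝ := max ((N : ℝ) / C) (2 * Real.log (4 * K * (8 * C + 10))) with hT
    set n : ℕ := max 2 (⌈Real.exp T⌉₊ + 1) with hn
    have hn2 : 2 ≤ n := le_max_left _ _
    have hnR : Real.exp T ≤ (n : ℝ) := by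
      have h1 : Real.exp T ≤ ((⌈Real.exp T⌉₊ + 1 : ℕ) : ℝ) := by
        push_cast
        exact le_trans (Nat.le_ceil _) (by linarith)
      have h2 : ((⌈Real.exp T⌉₊ + 1 : ℕ) : ℝ) ≤ (n : ℝ) := by
        have : (⌈Real.exp T⌉₊ + 1 : ℕ) ≤ n := le_max_right _ _
        exact_mod_cast this
      linarith
    have hnpos : (0:ℝ) < n := by positivity
    set L : ℝ := Real.log n with hL
    have hLT : T ≤ L := by
      rw [hL, ← Real.log_exp T]
      exact Real.log_le_log (Real.exp_pos _) hnR
    have hL0 : 0 ≤ L := le_trans (le_max_of_le_left (by positivity)) hLT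
    have hCL0 : 0 ≤ C * L := by positivity
    set R : ℕ := ⌈C * L⌉₊ with hR
    have hNR : N ≤ R := by
      have h1 : (N : ℝ) ≤ C * L := by
        have := le_trans (le_max_left ((N : ℝ) / C) _) hLT
        calc (N:ℝ) = C * ((N:ℝ)/C) := by field_simp
          _ ≤ C * L := by nlinarith
      exact_mod_cast le_trans h1 (Nat.le_ceil _)
    have hRle : (R : ℝ) ≤ C * L + 1 := le_of_lt (Nat.ceil_lt_add_one hCL0)
    -- ball and enumeration
    have hballfin : {g : Γ | wordLength S g ≤ R}.Finite := wl_ball_finite hSgen hSfin R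
    have hfin : Finite {g : Γ // wordLength S g ≤ R} := hballfin
    set k : ℕ := Nat.card {g : Γ // wordLength S g ≤ R} with hk
    have hk1 : 1 ≤ k := Nat.one_le_iff_ne_zero.2 (Nat.card_ne_zero.2
      ⟨⟨⟨1, by simp [wl_one]⟩⟩, hfin⟩)
    have hkb : (k : ℝ) ≤ Real.exp (ε * R) := hN R hNR
    set d : ℕ := Nat.clog 2 k with hd
    have hk2d : k ≤ 2 ^ d := Nat.le_pow_clog (by norm_num) k
    have h2d2k : 2 ^ d ≤ 2 * k := by
      rcases eq_or_lt_of_le hk1 with h1 | h1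
      · rw [hd, ← h1]
        norm_num
      · have h2 : 2 ^ (d - 1) < k := Nat.pow_pred_clog_lt_self (by norm_num) h1
        have h3 : 1 ≤ d := by
          by_contra h4
          push_neg at h4
          interval_cases d
          omega
        have h5 : 2 ^ d = 2 * 2 ^ (d - 1) := by
          rw [← pow_succ']
          congr 1
          omega
        omega
    obtain ⟨m, ⟨e⟩⟩ := Finite.exists_equiv_fin {g : Γ // wordLength S g ≤ R}
    have hmk : m = k := by rw [hk, Nat.card_eq_of_equiv_fin e]
    classical
    set f : ℕ → Γ := fun i => if h : i < m then (e.symm ⟨i, h⟩ : {g : Γ // wordLength S g ≤ R}).val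
      else 1 with hf
    have hfcov : ∀ g : Γ, wordLength S g ≤ R → ∃ i, i < 2 ^ d ∧ f i = g := by
      intro g hg
      refine ⟨(e ⟨g, hg⟩ : Fin m).val, ?_, ?_⟩
      · have := (e ⟨g, hg⟩).isLt
        omega
      · rw [hf]
        have hlt := (e ⟨g, hg⟩).isLt
        simp only [hlt, dif_pos]
        have : e.symm ⟨(e ⟨g, hg⟩ : Fin m).val, hlt⟩ = ⟨g, hg⟩ := by
          rw [Fin.eta]
          exact e.symm_apply_apply _
        rw [this]
    have hfbd : ∀ i, i < 2 ^ d → wordLength S (f i) ≤ R := by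
      intro i _
      rw [hf]
      by_cases h : i < m
      · simp only [h, dif_pos]
        exact (e.symm ⟨i, h⟩).2
      · simp only [h, dif_neg, not_false_iff]
        simp [wl_one]
    -- the word
    refine ⟨n, hn2, ψ (blk s hs d f).w.prod, blk_ne_one s hs d f, ?_, ?_⟩
    · -- length bound
      have hwl := blk_wl hSgen hs hsS R d f hfbd
      have hcast : ((4 ^ d * (2 * R + 8) : ℕ) : ℝ) ≤ (n : ℝ) := by
        push_cast
        have e1 : ((4:ℝ) ^ d) = ((2:ℝ) ^ d) ^ 2 := by
          rw [← pow_mul, mul_comm, pow_mul]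
          norm_num
        have e2 : ((2:ℝ) ^ d) ≤ 2 * k := by exact_mod_cast h2d2k
        have e3 : ((2:ℝ) ^ d) ^ 2 ≤ (2 * k) ^ 2 := by
          apply pow_le_pow_left₀ (by positivity) e2
        have e4 : ((2:ℝ) * k) ^ 2 ≤ 4 * Real.exp (ε * R) ^ 2 := by
          have : ((2:ℝ) * k) ^ 2 = 4 * (k:ℝ)^2 := by ring
          rw [this]
          have := pow_le_pow_left₀ (by positivity : (0:ℝ) ≤ (k:ℝ)) hkb 2
          linarith
        have e5 : Real.exp (ε * R) ^ 2 = Real.exp (2 * (ε * R)) := by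
          rw [sq, ← Real.exp_add]
          ring_nf
        have e6 : 2 * (ε * R) ≤ 2 * ε + L / 4 := by
          have h1 : 2 * (ε * R) ≤ 2 * ε * (C * L + 1) := by nlinarith
          have h2 : 2 * ε * C = 1 / 4 := by
            rw [hε]
            field_simp
            ring
          nlinarith [mul_le_mul_of_nonneg_left hRle (by positivity : (0:ℝ) ≤ 2 * ε)]
        have e7 : Real.exp (2 * (ε * R)) ≤ K * Real.exp (L / 4) := by
          rw [hK, ← Real.exp_add]
          exact Real.exp_le_exp.2 e6
        have e8 : 2 * (R:ℝ) + 8 ≤ (8 * C + 10) * Real.exp (L / 4) := by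
          have h1 : 2 * (R:ℝ) + 8 ≤ 2 * C * L + 10 := by linarith
          have h2 : L / 4 ≤ Real.exp (L / 4) := by
            have := Real.add_one_le_exp (L / 4)
            linarith
          have h3 : 1 ≤ Real.exp (L / 4) := Real.one_le_exp (by linarith)
          nlinarith
        have e9 : ((4:ℝ) ^ d) * (2 * (R:ℝ) + 8) ≤
            (4 * K * (8 * C + 10)) * (Real.exp (L / 4) * Real.exp (L / 4)) := by
          rw [e1]
          have hA : ((2:ℝ)^d)^2 ≤ 4 * (K * Real.exp (L/4)) := by
            calc ((2:ℝ)^d)^2 ≤ 4 * Real.exp (ε * R) ^ 2 := le_trans e3 e4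
              _ = 4 * Real.exp (2 * (ε * R)) := by rw [e5]
              _ ≤ 4 * (K * Real.exp (L/4)) := by nlinarith [e7]
          have hB : 0 ≤ 2 * (R:ℝ) + 8 := by positivity
          nlinarith [Real.exp_pos (L/4), e8, hA, mul_le_mul hA e8 hB (by positivity :
            (0:ℝ) ≤ 4 * (K * Real.exp (L/4)))]
        have e10 : Real.exp (L / 4) * Real.exp (L / 4) = Real.exp (L / 2) := by
          rw [← Real.exp_add]
          ring_nf
        have e11 : (4 * K * (8 * C + 10)) ≤ Real.exp (L / 2) := by
          have h1 : 2 * Real.log (4 * K * (8 * C + 10)) ≤ L :=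
            le_trans (le_max_right _ _) hLT
          have h2 : Real.log (4 * K * (8 * C + 10)) ≤ L / 2 := by linarith
          calc (4 * K * (8 * C + 10)) = Real.exp (Real.log (4 * K * (8 * C + 10))) :=
                (Real.exp_log hMpos).symm
            _ ≤ Real.exp (L / 2) := Real.exp_le_exp.2 h2
        have e12 : Real.exp (L / 2) * Real.exp (L / 2) = (n:ℝ) := by
          rw [← Real.exp_add]
          have : L / 2 + L / 2 = L := by ring
          rw [this, hL, Real.exp_log hnpos]
        calc ((4:ℝ) ^ d) * (2 * (R:ℝ) + 8)
            ≤ (4 * K * (8 * C + 10)) * (Real.exp (L / 4) * Real.exp (L / 4)) := e9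
          _ = (4 * K * (8 * C + 10)) * Real.exp (L / 2) := by rw [e10]
          _ ≤ Real.exp (L / 2) * Real.exp (L / 2) := by
              apply mul_le_mul_of_nonneg_right e11 (le_of_lt (Real.exp_pos _))
          _ = (n:ℝ) := e12
      have hfin2 : 4 ^ d * (2 * R + 8) ≤ n := by exact_mod_cast hcast
      omega
    · intro g hg
      have hgR : wordLength S g ≤ R := by
        have h1 : (wordLength S g : ℝ) ≤ (R : ℝ) := le_trans hg (Nat.le_ceil _)
        exact_mod_cast h1
      exact blk_eval s hs g d f (hfcov g hgR)
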